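/- The 2^{n}×2^{n} matrix M_b = αx·|0⟩⟨0|^{⊗n} + αy·|1⟩⟨1|^{⊗n} + z·σ_x^{⊗n} (with x, y ≥ 0 and α > 0) has eigenvalues z and −z each with multiplicity 2^{n−1} − 1, and two simple eigenvalues λ_± = α(x+y)/2 ± sqrt(z² + α²(x−y)²/4). -/

import Mathlib

open Matrix Real Polynomial

noncomputable section

/-- The all-zeros computational basis label of `n` qubits. -/
def k0 (n : ℕ) : Fin n → Fin 2 := fun _ => 0

/-- The all-ones computational basis label of `n` qubits. -/
def k1 (n : ℕ) : Fin n → Fin 2 := fun _ => 1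

/-- The observable `M_Z = |0⟩⟨0|^{⊗n} + |1⟩⟨1|^{⊗n}`. -/
def MZ (n : ℕ) : Matrix (Fin n → Fin 2) (Fin n → Fin 2) ℂ :=
  fun v w => (if v = k0 n ∧ w = k0 n then 1 else 0) + (if v = k1 n ∧ w = k1 n then 1 else 0)

/-- The observable `M_X = σ_x^{⊗n}`. -/
def MX (n : ℕ) : Matrix (Fin n → Fin 2) (Fin n → Fin 2) ℂ :=
  fun v w => if (∀ i, w i = v i + 1) then 1 else 0

/-- The `n`-qubit GHZ state vector `(|0⟩^{⊗n} + |1⟩^{⊗n})/√2`. -/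
def ghz (n : ℕ) : (Fin n → Fin 2) → ℂ :=
  fun v => ((if v = k0 n then 1 else 0) + (if v = k1 n then 1 else 0)) / (Real.sqrt 2 : ℝ)

/-- The projector `|GHZ_n⟩⟨GHZ_n|`. -/
def ghzProj (n : ℕ) : Matrix (Fin n → Fin 2) (Fin n → Fin 2) ℂ :=
  vecMulVec (ghz n) (star (ghz n))

/-- The real matrix `M_b = αx·|0⟩⟨0|^{⊗n} + αy·|1⟩⟨1|^{⊗n} + z·σ_x^{⊗n}`. -/
def MbR (n : ℕ) (α x y z : ℝ) : Matrix (Fin n → Fin 2) (Fin n → Fin 2) ℝ :=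
  fun v w => α * x * (if v = k0 n ∧ w = k0 n then 1 else 0)
    + α * y * (if v = k1 n ∧ w = k1 n then 1 else 0)
    + z * (if (∀ i, w i = v i + 1) then 1 else 0)

-- Fin 2 arithmetic facts
lemma fin2_addadd : ∀ a b : Fin 2, a + b + b = a := by decide
lemma fin2_self : ∀ a : Fin 2, a + a = 0 := by decide

variable {n : ℕ}

/-- the pairing equivalence -/
def pairEquiv (i0 : Fin n) : (Fin n → Fin 2) ≃ Fin 2 × {f : Fin n → Fin 2 // f i0 = 0} where
  toFun v := (v i0, ⟨fun i => v i + v i0, fin2_self _⟩)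
  invFun p := fun i => p.2.1 i + p.1
  left_inv v := by funext i; simp [fin2_addadd]
  right_inv p := by
    obtain ⟨a, r, hr⟩ := p
    refine Prod.ext ?_ ?_
    · simp [hr]
    · ext i; simp [hr, fin2_addadd]

lemma h0_iff (i0 : Fin n) (r : Fin n → Fin 2) (hr : r i0 = 0) (a : Fin 2) :
    (fun i => r i + a) = k0 n ↔ (a = 0 ∧ r = k0 n) := by
  constructor
  · intro h
    have ha : a = 0 := by have := congrFun h i0; simpa [k0, hr] using this
    subst ha
    refine ⟨rfl, ?_⟩
    funext i; have := congrFun h i; simpa [k0] using this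
  · rintro ⟨rfl, rfl⟩; funext i; simp [k0]

lemma h1_iff (i0 : Fin n) (r : Fin n → Fin 2) (hr : r i0 = 0) (a : Fin 2) :
    (fun i => r i + a) = k1 n ↔ (a = 1 ∧ r = k0 n) := by
  constructor
  · intro h
    have ha : a = 1 := by have := congrFun h i0; simpa [k1, hr] using this
    subst ha
    refine ⟨rfl, ?_⟩
    funext i
    have := congrFun h i
    simp only [k1] at this
    simp [k0]
    omega
  · rintro ⟨rfl, rfl⟩; funext i; simp [k0, k1]

lemma hflip_iff (i0 : Fin n) (r s : Fin n → Fin 2) (hr : r i0 = 0) (hs : s i0 = 0)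
    (a b : Fin 2) :
    (∀ i, (fun i => s i + b) i = (fun i => r i + a) i + 1) ↔ (b = a + 1 ∧ s = r) := by
  simp only
  constructor
  · intro h
    have hb : b = a + 1 := by have := h i0; simpa [hr, hs] using this
    subst hb
    refine ⟨rfl, ?_⟩
    funext i
    have := h i
    have : s i + (a + 1) = r i + (a + 1) := by rw [this]; abel
    exact by
      have h2 : ∀ u v w : Fin 2, u + w = v + w → u = v := by decide
      exact h2 _ _ _ this
  · rintro ⟨rfl, rfl⟩; intro i; abel

def Bmat (i0 : Fin n) (α x y z : ℝ) (r : {f : Fin n → Fin 2 // f i0 = 0}) :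
    Matrix (Fin 2) (Fin 2) ℝ :=
  if r.1 = k0 n then !![α * x, z; z, α * y] else !![0, z; z, 0]

lemma reindex_MbR (i0 : Fin n) (α x y z : ℝ) :
    reindex (pairEquiv i0) (pairEquiv i0) (MbR n α x y z)
      = blockDiagonal (Bmat i0 α x y z) := by
  ext ⟨a, r⟩ ⟨b, s⟩
  obtain ⟨r, hr⟩ := r
  obtain ⟨s, hs⟩ := s
  show MbR n α x y z (fun i => r i + a) (fun i => s i + b) = _
  rw [blockDiagonal_apply]
  unfold MbR Bmat
  rw [if_congr (and_congr (h0_iff i0 r hr a) (h0_iff i0 s hs b)) rfl rfl,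
    if_congr (and_congr (h1_iff i0 r hr a) (h1_iff i0 s hs b)) rfl rfl,
    if_congr (hflip_iff i0 r s hr hs a b) rfl rfl]
  by_cases hsr : r = s
  · subst hsr
    rw [if_pos (Subtype.ext rfl)]
    by_cases hrk : r = k0 n
    · rw [if_pos hrk]
      fin_cases a <;> fin_cases b <;> simp [hrk]
    · rw [if_neg hrk]
      fin_cases a <;> fin_cases b <;> simp [hrk]
  · rw [if_neg (fun h => hsr (congrArg Subtype.val h))]
    have h1 : ¬((a = 0 ∧ r = k0 n) ∧ (b = 0 ∧ s = k0 n)) :=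
      fun h => hsr (h.1.2.trans h.2.2.symm)
    have h2 : ¬((a = 1 ∧ r = k0 n) ∧ (b = 1 ∧ s = k0 n)) :=
      fun h => hsr (h.1.2.trans h.2.2.symm)
    have h3 : ¬(b = a + 1 ∧ s = r) := fun h => hsr h.2.symm
    simp [h1, h2, h3]


lemma charmatrix_blockDiagonal' {o m R : Type*} [Fintype o] [DecidableEq o] [Fintype m]
    [DecidableEq m] [CommRing R] (M : o → Matrix m m R) :
    charmatrix (blockDiagonal M) = blockDiagonal (fun k => charmatrix (M k)) := by
  ext ⟨i, a⟩ ⟨j, b⟩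
  by_cases hab : a = b
  · subst hab
    by_cases hij : i = j
    · subst hij; simp [blockDiagonal_apply, charmatrix_apply, diagonal]
    · simp [blockDiagonal_apply, charmatrix_apply, diagonal, hij]
  · simp [blockDiagonal_apply, Ne.symm hab, hab, charmatrix_apply, diagonal,
      Prod.ext_iff]

lemma charpoly_blockDiagonal' {o m R : Type*} [Fintype o] [DecidableEq o] [Fintype m]
    [DecidableEq m] [CommRing R] (M : o → Matrix m m R) :
    (blockDiagonal M).charpoly = ∏ k, (M k).charpoly := by
  unfold Matrix.charpoly
  rw [charmatrix_blockDiagonal', det_blockDiagonal]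

lemma charpoly_fin_two' {R : Type*} [CommRing R] (a b c d : R) :
    (!![a, b; c, d]).charpoly = X ^ 2 - C (a + d) * X + C (a * d - b * c) := by
  rw [Matrix.charpoly, det_fin_two]
  simp [charmatrix_apply, diagonal]
  ring

/-- `M_b` has eigenvalues `z` and `−z`, each with multiplicity `2^{n−1} − 1`, and two simple
eigenvalues `λ_± = α(x+y)/2 ± √(z² + α²(x−y)²/4)`, as recorded by its characteristic
polynomial. -/
theorem stmt15 (n : ℕ) (hn : 1 ≤ n) (α x y z : ℝ) (hα : 0 < α) (hx : 0 ≤ x) (hy : 0 ≤ y) :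
    (MbR n α x y z).charpoly =
      (X - C z) ^ (2 ^ (n - 1) - 1) * (X + C z) ^ (2 ^ (n - 1) - 1) *
        (X - C (α * (x + y) / 2 + Real.sqrt (z ^ 2 + α ^ 2 * (x - y) ^ 2 / 4))) *
        (X - C (α * (x + y) / 2 - Real.sqrt (z ^ 2 + α ^ 2 * (x - y) ^ 2 / 4))) := by
  have hn0 : 0 < n := hn
  set i0 : Fin n := ⟨0, hn0⟩ with hi0
  set s := z ^ 2 + α ^ 2 * (x - y) ^ 2 / 4 with hs
  have hs0 : 0 ≤ s := by positivity
  have hsq : Real.sqrt s * Real.sqrt s = s := Real.mul_self_sqrt hs0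
  set lp := α * (x + y) / 2 + Real.sqrt s with hlp
  set lm := α * (x + y) / 2 - Real.sqrt s with hlm
  have hsum : α * x + α * y = lp + lm := by rw [hlp, hlm]; ring
  have hprod : α * x * (α * y) - z * z = lp * lm := by
    have h : lp * lm = (α * (x + y) / 2) ^ 2 - Real.sqrt s * Real.sqrt s := by
      rw [hlp, hlm]; ring
    rw [h, hsq, hs]; ring
  have hP : (!![α * x, z; z, α * y] : Matrix (Fin 2) (Fin 2) ℝ).charpoly
      = (X - C lp) * (X - C lm) := by
    rw [charpoly_fin_two', hsum, hprod, C_add, C_mul]; ring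
  have hQ : (!![0, z; z, 0] : Matrix (Fin 2) (Fin 2) ℝ).charpoly
      = (X - C z) * (X + C z) := by
    rw [charpoly_fin_two', show (0:ℝ) + 0 = 0 from by ring,
      show (0:ℝ) * 0 - z * z = -(z * z) from by ring, map_neg, Polynomial.C_mul, map_zero]
    ring
  have hmain : (MbR n α x y z).charpoly = (blockDiagonal (Bmat i0 α x y z)).charpoly := by
    rw [← reindex_MbR i0, charpoly_reindex]
  rw [hmain, charpoly_blockDiagonal']
  set R := {f : Fin n → Fin 2 // f i0 = 0}
  have hc0 : k0 n i0 = 0 := rfl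
  set c : R := ⟨k0 n, hc0⟩ with hc
  have hB : ∀ k : R, (Bmat i0 α x y z k).charpoly
      = if k = c then (X - C lp) * (X - C lm) else (X - C z) * (X + C z) := by
    intro k
    unfold Bmat
    rw [apply_ite Matrix.charpoly, hP, hQ]
    congr 1
    exact propext ⟨fun h => Subtype.ext h, fun h => congrArg Subtype.val h⟩
  rw [Finset.prod_congr rfl (fun k _ => hB k)]
  rw [← Finset.mul_prod_erase Finset.univ _ (Finset.mem_univ c), if_pos rfl]
  have herase : ∏ k ∈ Finset.univ.erase c,
      (if k = c then (X - C lp) * (X - C lm) else (X - C z) * (X + C z))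
      = ((X - C z) * (X + C z)) ^ (Fintype.card R - 1) := by
    rw [Finset.prod_congr rfl (fun k hk => if_neg (Finset.ne_of_mem_erase hk)),
      Finset.prod_const, Finset.card_erase_of_mem (Finset.mem_univ c), Finset.card_univ]
  rw [herase]
  have hcard : Fintype.card R = 2 ^ (n - 1) := by
    have h2 : (2 : ℕ) ^ n = 2 * Fintype.card R := by
      have := Fintype.card_congr (pairEquiv i0)
      simpa [Fintype.card_prod] using this
    have h3 : (2 : ℕ) ^ n = 2 * 2 ^ (n - 1) := by
      conv_lhs => rw [← Nat.sub_add_cancel hn]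
      rw [pow_succ]; ring
    omega
  rw [hcard, mul_pow]
  ring
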